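/- Let Φ be a reduced irreducible root system in ℝ^d with d ≥ 2. Then every type-1 decomposition Φ = Φ_1 ⊔ ⋯ ⊔ Φ_s satisfies Σ_{k=1}^s rank Φ_k ≥ d + 1, where rank Φ_k := dim_ℝ span_ℝ Φ_k. -/
import Mathlib


noncomputable section

/-- The standard inner product on `ℝ^d`. -/
def dotR {d : ℕ} (x y : Fin d → ℝ) : ℝ := ∑ i, x i * y i

/-- `Φ` is a root system in `ℝ^d`: a finite set of nonzero vectors spanning `ℝ^d`,
closed under the reflections `s_α`, with integral Cartan numbers. -/
def IsRootSystem {d : ℕ} (Φ : Finset (Fin d → ℝ)) : Prop :=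
  (∀ α ∈ Φ, α ≠ 0) ∧
  Submodule.span ℝ (Φ : Set (Fin d → ℝ)) = ⊤ ∧
  (∀ α ∈ Φ, ∀ β ∈ Φ, β - (2 * dotR β α / dotR α α) • α ∈ Φ) ∧
  (∀ α ∈ Φ, ∀ β ∈ Φ, ∃ n : ℤ, 2 * dotR β α / dotR α α = (n : ℝ))

/-- `Φ` is reduced: the only multiples of a root `α` in `Φ` are `±α`. -/
def IsReducedRS {d : ℕ} (Φ : Finset (Fin d → ℝ)) : Prop :=
  ∀ α ∈ Φ, ∀ t : ℝ, t • α ∈ Φ → t = 1 ∨ t = -1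

/-- `Φ` is irreducible: it is not the disjoint union of two nonempty mutually
orthogonal subsets. -/
def IsIrreducibleRS {d : ℕ} (Φ : Finset (Fin d → ℝ)) : Prop :=
  ∀ A B : Set (Fin d → ℝ), (Φ : Set (Fin d → ℝ)) = A ∪ B → Disjoint A B →
    (∀ a ∈ A, ∀ b ∈ B, dotR a b = 0) → A = ∅ ∨ B = ∅

/-- Every type-1 decomposition `Φ = Φ_1 ⊔ ⋯ ⊔ Φ_s` of a reduced irreducible
root system of rank `d ≥ 2` satisfies `Σ rank Φ_k ≥ d + 1`. -/
lemma dotR_comm' {d : ℕ} (x y : Fin d → ℝ) : dotR x y = dotR y x := by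
  simp [dotR, mul_comm]

lemma dotR_self_ne_zero' {d : ℕ} {x : Fin d → ℝ} (hx : x ≠ 0) : dotR x x ≠ 0 := by
  have : 0 < dotR x x := by
    obtain ⟨i, hi⟩ : ∃ i, x i ≠ 0 := by
      by_contra h
      push_neg at h
      exact hx (funext h)
    exact Finset.sum_pos' (fun j _ => mul_self_nonneg _)
      ⟨i, Finset.mem_univ i, mul_self_pos.2 hi⟩
  exact ne_of_gt this

lemma finrank_finsetSup_le' {ι : Type*} {d : ℕ} (t : Finset ι) (f : ι → Submodule ℝ (Fin d → ℝ)) :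
    Module.finrank ℝ ↥(t.sup f) ≤ ∑ i ∈ t, Module.finrank ℝ (f i) := by
  induction t using Finset.cons_induction with
  | empty => simp
  | cons a t ha ih =>
    rw [Finset.sup_cons, Finset.sum_cons]
    exact le_trans (Submodule.finrank_add_le_finrank_add_finrank _ _)
      (Nat.add_le_add_left ih _)

theorem stmt3 {d : ℕ} (hd : 2 ≤ d) (Φ : Finset (Fin d → ℝ))
    (hRS : IsRootSystem Φ) (hred : IsReducedRS Φ) (hirr : IsIrreducibleRS Φ)
    (s : ℕ) (hs : 1 ≤ s) (P : Fin s → Set (Fin d → ℝ))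
    (hne : ∀ k, (P k).Nonempty)
    (hproper : ∀ k, P k ⊂ (Φ : Set (Fin d → ℝ)))
    (hdisj : ∀ k l, k ≠ l → Disjoint (P k) (P l))
    (hunion : (⋃ k, P k) = (Φ : Set (Fin d → ℝ)))
    (hspan : ∀ k, (Φ : Set (Fin d → ℝ)) ∩ ↑(Submodule.span ℝ (P k)) = P k) :
    d + 1 ≤ ∑ k, Module.finrank ℝ ↥(Submodule.span ℝ (P k)) := by
  classical
  obtain ⟨hnz, hspanΦ, hrefl, -⟩ := hRS
  set V : Fin s → Submodule ℝ (Fin d → ℝ) := fun k => Submodule.span ℝ (P k) with hV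
  have hPsub : ∀ k, P k ⊆ (Φ : Set (Fin d → ℝ)) := fun k => (hproper k).subset
  -- s ≥ 2
  have h2s : 2 ≤ s := by
    by_contra h
    have hs1 : s = 1 := by omega
    have k0 : Fin s := ⟨0, by omega⟩
    have : (⋃ k, P k) = P k0 := by
      ext x
      simp only [Set.mem_iUnion]
      constructor
      · rintro ⟨k, hk⟩
        have : k = k0 := by
          apply Fin.ext
          omega
        rwa [this] at hk
      · exact fun hx => ⟨k0, hx⟩
    rw [hunion] at this
    exact (hproper k0).ne this.symm
  -- sup of V = ⊤
  have hsup : Finset.univ.sup V = ⊤ := by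
    rw [eq_top_iff, ← hspanΦ, Submodule.span_le]
    intro x hx
    rw [← hunion] at hx
    obtain ⟨k, hk⟩ := Set.mem_iUnion.1 hx
    exact (Finset.le_sup (Finset.mem_univ k) : V k ≤ _) (Submodule.subset_span hk)
  have hdfin : Module.finrank ℝ (Fin d → ℝ) = d := Module.finrank_fin_fun (R := ℝ)
  by_contra hlt
  push_neg at hlt
  have hsum_le : ∑ k, Module.finrank ℝ ↥(V k) ≤ d := Nat.lt_succ_iff.mp hlt
  have hd_le : d ≤ ∑ k, Module.finrank ℝ ↥(V k) := by
    calc d = Module.finrank ℝ ↥(⊤ : Submodule ℝ (Fin d → ℝ)) := by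
            rw [finrank_top, hdfin]
    _ = Module.finrank ℝ ↥(Finset.univ.sup V) := by rw [hsup]
    _ ≤ ∑ k, Module.finrank ℝ ↥(V k) := finrank_finsetSup_le' _ _
  have hsum : ∑ k, Module.finrank ℝ ↥(V k) = d := le_antisymm hsum_le hd_le
  -- each V k is disjoint from the sup of the others
  have hkey : ∀ k, Disjoint (V k) ((Finset.univ.erase k).sup V) := by
    intro k
    set W := (Finset.univ.erase k).sup V with hW
    have hsupW : V k ⊔ W = ⊤ := by
      rw [← hsup, ← Finset.insert_erase (Finset.mem_univ k), Finset.sup_insert]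
    have h1 : Module.finrank ℝ ↥(V k ⊔ W) + Module.finrank ℝ ↥(V k ⊓ W)
        = Module.finrank ℝ ↥(V k) + Module.finrank ℝ ↥W :=
      Submodule.finrank_sup_add_finrank_inf_eq _ _
    have h2 : Module.finrank ℝ ↥W ≤ ∑ l ∈ Finset.univ.erase k, Module.finrank ℝ ↥(V l) :=
      finrank_finsetSup_le' _ _
    have h3 : Module.finrank ℝ ↥(V k) + ∑ l ∈ Finset.univ.erase k, Module.finrank ℝ ↥(V l) = d := by
      rw [Finset.add_sum_erase Finset.univ (fun l => Module.finrank ℝ ↥(V l)) (Finset.mem_univ k)]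
      exact hsum
    have htop : Module.finrank ℝ ↥(V k ⊔ W) = d := by rw [hsupW, finrank_top, hdfin]
    have h4 : Module.finrank ℝ ↥(V k ⊓ W) = 0 := by omega
    rw [disjoint_iff]
    exact Submodule.finrank_eq_zero.mp h4
  -- orthogonality across parts
  have horth : ∀ k l, k ≠ l → ∀ α ∈ P k, ∀ β ∈ P l, dotR β α = 0 := by
    intro k l hkl α hα β hβ
    have hαΦ := hPsub k hα
    have hβΦ := hPsub l hβ
    set c : ℝ := 2 * dotR β α / dotR α α with hc
    have hγ : β - c • α ∈ (Φ : Set (Fin d → ℝ)) := hrefl α hαΦ β hβΦ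
    rw [← hunion] at hγ
    obtain ⟨m, hm⟩ := Set.mem_iUnion.1 hγ
    have hαV : α ∈ V k := Submodule.subset_span hα
    have hβV : β ∈ V l := Submodule.subset_span hβ
    have hγV : β - c • α ∈ V m := Submodule.subset_span hm
    have hc0 : c = 0 := by
      by_cases hmk : m = k
      · subst hmk
        exfalso
        have hβk : β ∈ V m := by
          have := Submodule.add_mem (V m) hγV (Submodule.smul_mem _ c hαV)
          simpa using this
        have hlm : l ≠ m := fun h => hkl h.symm
        have hβW : β ∈ (Finset.univ.erase m).sup V :=
          (Finset.le_sup (Finset.mem_erase.2 ⟨hlm, Finset.mem_univ l⟩) : V l ≤ _) hβV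
        exact hnz β hβΦ (Submodule.disjoint_def.mp (hkey m) β hβk hβW)
      · have hlk : l ≠ k := fun h => hkl h.symm
        have hmem : β - (β - c • α) ∈ (Finset.univ.erase k).sup V :=
          Submodule.sub_mem _
            ((Finset.le_sup (Finset.mem_erase.2 ⟨hlk, Finset.mem_univ l⟩) : V l ≤ _) hβV)
            ((Finset.le_sup (Finset.mem_erase.2 ⟨hmk, Finset.mem_univ m⟩) : V m ≤ _) hγV)
        have heq : β - (β - c • α) = c • α := by abel
        rw [heq] at hmem
        have hz : c • α = 0 :=
          Submodule.disjoint_def.mp (hkey k) _ (Submodule.smul_mem _ c hαV) hmem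
        rcases smul_eq_zero.mp hz with h | h
        · exact h
        · exact absurd h (hnz α hαΦ)
    have hαα := dotR_self_ne_zero' (hnz α hαΦ)
    rw [hc, div_eq_zero_iff] at hc0
    rcases hc0 with h | h
    · linarith
    · exact absurd h hαα
  -- apply irreducibility
  set k0 : Fin s := ⟨0, by omega⟩ with hk0
  set k1 : Fin s := ⟨1, by omega⟩ with hk1
  set A : Set (Fin d → ℝ) := P k0 with hA
  set B : Set (Fin d → ℝ) := ⋃ (k) (_ : k ≠ k0), P k with hB
  have hAB : (Φ : Set (Fin d → ℝ)) = A ∪ B := by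
    rw [← hunion]
    ext x
    simp only [Set.mem_iUnion, Set.mem_union, hA, hB]
    constructor
    · rintro ⟨k, hk⟩
      by_cases h : k = k0
      · exact Or.inl (h ▸ hk)
      · exact Or.inr ⟨k, h, hk⟩
    · rintro (h | ⟨k, _, hk⟩)
      · exact ⟨k0, h⟩
      · exact ⟨k, hk⟩
  have hABdisj : Disjoint A B := by
    rw [Set.disjoint_left]
    intro x hxA hxB
    simp only [hB, Set.mem_iUnion] at hxB
    obtain ⟨k, hk, hxk⟩ := hxB
    exact Set.disjoint_left.mp (hdisj k0 k (Ne.symm hk)) hxA hxk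
  have hABorth : ∀ a ∈ A, ∀ b ∈ B, dotR a b = 0 := by
    intro a ha b hb
    simp only [hB, Set.mem_iUnion] at hb
    obtain ⟨l, hl, hbl⟩ := hb
    rw [dotR_comm']
    exact horth k0 l (Ne.symm hl) a ha b hbl
  rcases hirr A B hAB hABdisj hABorth with h | h
  · exact (hne k0).ne_empty h
  · have hk10 : k1 ≠ k0 := by
      simp [hk0, hk1, Fin.ext_iff]
    obtain ⟨b, hb⟩ := hne k1
    have : b ∈ B := by
      simp only [hB, Set.mem_iUnion]
      exact ⟨k1, hk10, hb⟩
    rw [h] at this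
    exact this


end
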